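/- The PEPS state Φ_BT satisfies H_BT Φ_BT = 0; in particular, whenever Φ_BT ≠ 0 it is a ground state of H_BT, i.e. an eigenvector for the smallest eigenvalue 0 of the positive semidefinite operator H_BT. -/

import Mathlib

open ComplexOrder

/-- A tile over the colour set `Fin k`: a 4-tuple of colours `(u, d, l, r)`. -/
abbrev Tile (k : ℕ) := Fin k × Fin k × Fin k × Fin k

namespace Tile
def u {k : ℕ} (w : Tile k) : Fin k := w.1
def d {k : ℕ} (w : Tile k) : Fin k := w.2.1
def l {k : ℕ} (w : Tile k) : Fin k := w.2.2.1
def r {k : ℕ} (w : Tile k) : Fin k := w.2.2.2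
end Tile

/-- A boundary condition on the `m × n` grid: a colour for each boundary edge. -/
structure BC (k m n : ℕ) where
  top : Fin n → Fin k
  bot : Fin n → Fin k
  left : Fin m → Fin k
  right : Fin m → Fin k

/-- A configuration assigns a 4-tuple of colours to each plaquette of the `m × n` grid
(first index: the row, increasing downwards; second index: the column). -/
abbrev Config (k m n : ℕ) := Fin m × Fin n → Tile k

/-- A configuration is a valid tiling for `(T, γ)`: every plaquette carries a tile of `T`,
adjacent plaquettes agree on the shared edge, and boundary edges carry the prescribed
colours. -/
def IsValidTiling {k m n : ℕ} (T : Finset (Tile k)) (γ : BC k m n)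
    (c : Config k m n) : Prop :=
  (∀ p, c p ∈ T) ∧
  (∀ (i : Fin m) (j : Fin n) (h : (j : ℕ) + 1 < n),
    (c (i, j)).r = (c (i, ⟨(j : ℕ) + 1, h⟩)).l) ∧
  (∀ (i : Fin m) (j : Fin n) (h : (i : ℕ) + 1 < m),
    (c (i, j)).d = (c (⟨(i : ℕ) + 1, h⟩, j)).u) ∧
  (∀ (hm : 0 < m) (j : Fin n), (c (⟨0, hm⟩, j)).u = γ.top j) ∧
  (∀ (hm : 0 < m) (j : Fin n), (c (⟨m - 1, by omega⟩, j)).d = γ.bot j) ∧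
  (∀ (hn : 0 < n) (i : Fin m), (c (i, ⟨0, hn⟩)).l = γ.left i) ∧
  (∀ (hn : 0 < n) (i : Fin m), (c (i, ⟨n - 1, by omega⟩)).r = γ.right i)

/-- The energy of a configuration: the number of violated constraints.  There is one
constraint for each pair of adjacent plaquettes (both tiles belong to `T` and match on the
shared edge) and one constraint for each boundary plaquette and boundary edge of it
(the tile belongs to `T` and shows the prescribed colour on that boundary edge). -/
def energy {k m n : ℕ} (T : Finset (Tile k)) (γ : BC k m n) (c : Config k m n) : ℕ :=
  -- horizontally adjacent pairs
  (∑ i : Fin m, ∑ j : Fin n,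
    if h : (j : ℕ) + 1 < n then
      (if c (i, j) ∈ T ∧ c (i, ⟨(j : ℕ) + 1, h⟩) ∈ T ∧
          (c (i, j)).r = (c (i, ⟨(j : ℕ) + 1, h⟩)).l then 0 else 1)
    else 0) +
  -- vertically adjacent pairs
  (∑ i : Fin m, ∑ j : Fin n,
    if h : (i : ℕ) + 1 < m then
      (if c (i, j) ∈ T ∧ c (⟨(i : ℕ) + 1, h⟩, j) ∈ T ∧
          (c (i, j)).d = (c (⟨(i : ℕ) + 1, h⟩, j)).u then 0 else 1)
    else 0) +
  -- top and bottom boundary constraints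
  (if hm : 0 < m then
    (∑ j : Fin n, if c (⟨0, hm⟩, j) ∈ T ∧ (c (⟨0, hm⟩, j)).u = γ.top j then 0 else 1) +
    (∑ j : Fin n, if c (⟨m - 1, by omega⟩, j) ∈ T ∧
        (c (⟨m - 1, by omega⟩, j)).d = γ.bot j then 0 else 1)
  else 0) +
  -- left and right boundary constraints
  (if hn : 0 < n then
    (∑ i : Fin m, if c (i, ⟨0, hn⟩) ∈ T ∧ (c (i, ⟨0, hn⟩)).l = γ.left i then 0 else 1) +
    (∑ i : Fin m, if c (i, ⟨n - 1, by omega⟩) ∈ T ∧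
        (c (i, ⟨n - 1, by omega⟩)).r = γ.right i then 0 else 1)
  else 0)


/-- The entry of the PEPS tensor `A_T` with virtual indices `w = (u,d,l,r)` and physical
index `s`: it is `1` if `w ∈ T` and `s = w`, and `0` otherwise. -/
noncomputable def ATentry {k : ℕ} (T : Finset (Tile k)) (w s : Tile k) : ℂ :=
  if w ∈ T ∧ s = w then 1 else 0

/-- The 4-tuple of colours on the edges of the plaquette `p`, determined by the boundary
condition `γ` on boundary edges, and by the assignments `eH` (interior edges shared by
horizontally adjacent plaquettes) and `eV` (interior edges shared by vertically adjacent
plaquettes) on interior edges. -/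
def plaqColours {k m n : ℕ} (γ : BC k m n)
    (eH : Fin m × Fin (n - 1) → Fin k) (eV : Fin (m - 1) × Fin n → Fin k)
    (p : Fin m × Fin n) : Tile k :=
  ( if _h : (p.1 : ℕ) = 0 then γ.top p.2
      else eV (⟨(p.1 : ℕ) - 1, by have := p.1.isLt; omega⟩, p.2),
    if _h : (p.1 : ℕ) = m - 1 then γ.bot p.2
      else eV (⟨(p.1 : ℕ), by have := p.1.isLt; omega⟩, p.2),
    if _h : (p.2 : ℕ) = 0 then γ.left p.1
      else eH (p.1, ⟨(p.2 : ℕ) - 1, by have := p.2.isLt; omega⟩),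
    if _h : (p.2 : ℕ) = n - 1 then γ.right p.1
      else eH (p.1, ⟨(p.2 : ℕ), by have := p.2.isLt; omega⟩) )

/-- The coefficient of the PEPS state `Φ_BT` at the physical basis vector indexed by
`s : plaquettes → Γ⁴`: the sum over all assignments of a colour to every interior edge
(boundary edges being fixed by `γ`) of the product over all plaquettes of the corresponding
entry of the tensor `A_T`. -/
noncomputable def pepsCoeff {k m n : ℕ} (T : Finset (Tile k)) (γ : BC k m n)
    (s : Config k m n) : ℂ :=
  ∑ eH : Fin m × Fin (n - 1) → Fin k, ∑ eV : Fin (m - 1) × Fin n → Fin k,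
    ∏ p : Fin m × Fin n, ATentry T (plaqColours γ eH eV p) (s p)

/-- The Hamiltonian `H_BT`: the diagonal operator on `ℂ^{(Γ⁴)^{m·n}}` whose diagonal entry at
the basis vector indexed by a configuration `c` is the energy `E(c)`. -/
noncomputable def Hbt {k m n : ℕ} (T : Finset (Tile k)) (γ : BC k m n) :
    Matrix (Config k m n) (Config k m n) ℂ :=
  Matrix.diagonal fun c => (energy T γ c : ℂ)

/-- The PEPS state `Φ_BT` as a vector in `ℂ^{(Γ⁴)^{m·n}}`. -/
noncomputable def PhiBT {k m n : ℕ} (T : Finset (Tile k)) (γ : BC k m n) :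
    Config k m n → ℂ :=
  fun s => pepsCoeff T γ s

set_option maxHeartbeats 1000000 in
lemma energy_eq_zero_of_prod_ne_zero {k m n : ℕ} (T : Finset (Tile k)) (γ : BC k m n)
    (eH : Fin m × Fin (n - 1) → Fin k) (eV : Fin (m - 1) × Fin n → Fin k)
    (s : Config k m n)
    (hprod : ∏ p : Fin m × Fin n, ATentry T (plaqColours γ eH eV p) (s p) ≠ 0) :
    energy T γ s = 0 := by
  rw [Finset.prod_ne_zero_iff] at hprod
  have key : ∀ p : Fin m × Fin n, s p ∈ T ∧ s p = plaqColours γ eH eV p := by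
    intro p
    have h := hprod p (Finset.mem_univ p)
    by_cases hc : plaqColours γ eH eV p ∈ T ∧ s p = plaqColours γ eH eV p
    · exact ⟨hc.2 ▸ hc.1, hc.2⟩
    · simp [ATentry, hc] at h
  unfold energy
  have h1 : (∑ i : Fin m, ∑ j : Fin n,
      if h : (j : ℕ) + 1 < n then
        (if s (i, j) ∈ T ∧ s (i, ⟨(j : ℕ) + 1, h⟩) ∈ T ∧
            (s (i, j)).r = (s (i, ⟨(j : ℕ) + 1, h⟩)).l then 0 else 1)
      else 0) = 0 := by
    refine Finset.sum_eq_zero fun i _ => Finset.sum_eq_zero fun j _ => ?_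
    split
    · rename_i h
      rw [if_pos]
      refine ⟨(key (i, j)).1, (key (i, ⟨(j : ℕ) + 1, h⟩)).1, ?_⟩
      rw [(key (i, j)).2, (key (i, ⟨(j : ℕ) + 1, h⟩)).2]
      simp only [plaqColours, Tile.r, Tile.l]
      rw [dif_neg (by omega), dif_neg (by omega)]
      exact congrArg eH (by simp [Prod.ext_iff, Fin.ext_iff])
    · rfl
  have h2 : (∑ i : Fin m, ∑ j : Fin n,
      if h : (i : ℕ) + 1 < m then
        (if s (i, j) ∈ T ∧ s (⟨(i : ℕ) + 1, h⟩, j) ∈ T ∧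
            (s (i, j)).d = (s (⟨(i : ℕ) + 1, h⟩, j)).u then 0 else 1)
      else 0) = 0 := by
    refine Finset.sum_eq_zero fun i _ => Finset.sum_eq_zero fun j _ => ?_
    split
    · rename_i h
      rw [if_pos]
      refine ⟨(key (i, j)).1, (key (⟨(i : ℕ) + 1, h⟩, j)).1, ?_⟩
      rw [(key (i, j)).2, (key (⟨(i : ℕ) + 1, h⟩, j)).2]
      simp only [plaqColours, Tile.d, Tile.u]
      rw [dif_neg (by omega), dif_neg (by omega)]
      exact congrArg eV (by simp [Prod.ext_iff, Fin.ext_iff])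
    · rfl
  have h3 : (if hm : 0 < m then
      (∑ j : Fin n, if s (⟨0, hm⟩, j) ∈ T ∧ (s (⟨0, hm⟩, j)).u = γ.top j then 0 else 1) +
      (∑ j : Fin n, if s (⟨m - 1, by omega⟩, j) ∈ T ∧
          (s (⟨m - 1, by omega⟩, j)).d = γ.bot j then 0 else 1)
    else 0) = 0 := by
    split
    · rename_i hm
      have ha : (∑ j : Fin n,
          if s (⟨0, hm⟩, j) ∈ T ∧ (s (⟨0, hm⟩, j)).u = γ.top j then 0 else 1) = 0 := by
        refine Finset.sum_eq_zero fun j _ => ?_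
        rw [if_pos]
        refine ⟨(key (⟨0, hm⟩, j)).1, ?_⟩
        rw [(key (⟨0, hm⟩, j)).2]
        simp only [plaqColours, Tile.u]
        simp
      have hb : (∑ j : Fin n, if s (⟨m - 1, by omega⟩, j) ∈ T ∧
          (s (⟨m - 1, by omega⟩, j)).d = γ.bot j then 0 else 1) = 0 := by
        refine Finset.sum_eq_zero fun j _ => ?_
        rw [if_pos]
        refine ⟨(key (⟨m - 1, by omega⟩, j)).1, ?_⟩
        rw [(key (⟨m - 1, by omega⟩, j)).2]
        simp only [plaqColours, Tile.d]
        simp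
      omega
    · rfl
  have h4 : (if hn : 0 < n then
      (∑ i : Fin m, if s (i, ⟨0, hn⟩) ∈ T ∧ (s (i, ⟨0, hn⟩)).l = γ.left i then 0 else 1) +
      (∑ i : Fin m, if s (i, ⟨n - 1, by omega⟩) ∈ T ∧
          (s (i, ⟨n - 1, by omega⟩)).r = γ.right i then 0 else 1)
    else 0) = 0 := by
    split
    · rename_i hn
      have ha : (∑ i : Fin m,
          if s (i, ⟨0, hn⟩) ∈ T ∧ (s (i, ⟨0, hn⟩)).l = γ.left i then 0 else 1) = 0 := by
        refine Finset.sum_eq_zero fun i _ => ?_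
        rw [if_pos]
        refine ⟨(key (i, ⟨0, hn⟩)).1, ?_⟩
        rw [(key (i, ⟨0, hn⟩)).2]
        simp only [plaqColours, Tile.l]
        simp
      have hb : (∑ i : Fin m, if s (i, ⟨n - 1, by omega⟩) ∈ T ∧
          (s (i, ⟨n - 1, by omega⟩)).r = γ.right i then 0 else 1) = 0 := by
        refine Finset.sum_eq_zero fun i _ => ?_
        rw [if_pos]
        refine ⟨(key (i, ⟨n - 1, by omega⟩)).1, ?_⟩
        rw [(key (i, ⟨n - 1, by omega⟩)).2]
        simp only [plaqColours, Tile.r]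
        simp
      omega
    · rfl
  omega

set_option maxHeartbeats 1000000 in
/-- The PEPS state `Φ_BT` satisfies `H_BT Φ_BT = 0`; in particular, `H_BT` is positive
semidefinite, and whenever `Φ_BT ≠ 0` it is a ground state of `H_BT`, i.e. an eigenvector
for the smallest eigenvalue `0` of the positive semidefinite operator `H_BT`. -/
theorem Hbt_mulVec_PhiBT (k m n : ℕ) (T : Finset (Tile k)) (γ : BC k m n) :
    (Hbt T γ).PosSemidef ∧
    (Hbt T γ).mulVec (PhiBT T γ) = 0 ∧
    (PhiBT T γ ≠ 0 →
      Module.End.HasEigenvector ((Hbt T γ).mulVecLin) 0 (PhiBT T γ) ∧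
      ∀ μ : ℝ, Module.End.HasEigenvalue ((Hbt T γ).mulVecLin) (μ : ℂ) → 0 ≤ μ) := by
  have hPhi : ∀ c, (energy T γ c : ℂ) * PhiBT T γ c = 0 := by
    intro c
    by_cases hE : energy T γ c = 0
    · simp [hE]
    · have hz : PhiBT T γ c = 0 := by
        unfold PhiBT pepsCoeff
        refine Finset.sum_eq_zero fun eH _ => Finset.sum_eq_zero fun eV _ => ?_
        by_contra hne
        exact hE (energy_eq_zero_of_prod_ne_zero T γ eH eV c hne)
      rw [hz, mul_zero]
  have hps : (Hbt T γ).PosSemidef := by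
    refine Matrix.posSemidef_diagonal_iff.mpr fun c => ?_
    rw [show ((energy T γ c : ℕ) : ℂ) = ((energy T γ c : ℝ) : ℂ) by push_cast; ring]
    exact Complex.zero_le_real.mpr (Nat.cast_nonneg _)
  have hmv : (Hbt T γ).mulVec (PhiBT T γ) = 0 := by
    funext c
    rw [Hbt, Matrix.mulVec_diagonal]
    exact hPhi c
  refine ⟨hps, hmv, fun hne => ⟨⟨?_, hne⟩, ?_⟩⟩
  · rw [Module.End.mem_eigenspace_iff, Matrix.mulVecLin_apply, hmv, zero_smul]
  · intro μ hμ
    obtain ⟨v, hv⟩ := hμ.exists_hasEigenvector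
    have hv1 : (Hbt T γ).mulVec v = (μ : ℂ) • v := by
      simpa [Matrix.mulVecLin_apply] using hv.apply_eq_smul
    have h0 := hps.dotProduct_mulVec_nonneg v
    rw [hv1, dotProduct_smul, smul_eq_mul] at h0
    have hpos : 0 < dotProduct (star v) v :=
      Matrix.dotProduct_star_self_pos_iff.mpr hv.2
    rw [Complex.lt_def] at hpos
    rw [Complex.le_def] at h0
    have hre := h0.1
    rw [Complex.mul_re, Complex.ofReal_re, Complex.ofReal_im] at hre
    simp only [Complex.zero_re, Complex.zero_im] at hre hpos
    nlinarith [hpos.1, hre]
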